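/- arXiv:math-ph/0604033 — 2 statements merged into one kernel-verified Lean document; each statement's English description precedes it below -/
import Mathlib

section
/- Let A be a 2×2 complex matrix with entries a_{ij} such that Im A is positive definite and Re a₁₁ = Re a₂₂ = 0. Set Δ := (2·(Im a₁₁)(Im a₂₂) + Re(a₁₂a₂₁))² − |a₁₂a₂₁|², which is positive. Then the integral over (v₁,v₂) ∈ ℝ² of |det(A − diag(v₁,v₂))|⁻² equals 2π²/√Δ. -/
open MeasureTheory Matrix Real ComplexOrder

lemma integrable_inv_sq_add (x₀ y : ℝ) (hy : 0 < y) :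
    Integrable (fun v : ℝ => ((v - x₀)^2 + y^2)⁻¹) := by
  have h : (fun v : ℝ => ((v - x₀)^2 + y^2)⁻¹)
      = fun v : ℝ => (y^2)⁻¹ * (1 + ((v - x₀)/y)^2)⁻¹ := by
    funext v
    rw [← mul_inv]
    congr 1
    field_simp
    ring
  rw [h]
  exact ((integrable_inv_one_add_sq.comp_div hy.ne').comp_sub_right x₀).const_mul _

lemma integral_inv_sq_add (x₀ y : ℝ) (hy : 0 < y) :
    ∫ v : ℝ, ((v - x₀)^2 + y^2)⁻¹ = π / y := by
  have h : (fun v : ℝ => ((v - x₀)^2 + y^2)⁻¹)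
      = fun v : ℝ => (y^2)⁻¹ * (1 + ((v - x₀)/y)^2)⁻¹ := by
    funext v
    rw [← mul_inv]
    congr 1
    field_simp
    ring
  rw [h, integral_const_mul]
  rw [integral_sub_right_eq_self (fun v : ℝ => (1 + (v/y)^2)⁻¹) x₀]
  rw [Measure.integral_comp_div (fun v : ℝ => (1 + v^2)⁻¹) y, integral_univ_inv_one_add_sq]
  rw [abs_of_pos hy, smul_eq_mul]
  field_simp

lemma quad_eq (a b c : ℝ) (ha : 0 < a) (hd : 0 < 4*a*c - b^2) :
    (fun v : ℝ => (a*v^2 + b*v + c)⁻¹)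
      = fun v : ℝ => a⁻¹ * ((v - (-b/(2*a)))^2 + (Real.sqrt (4*a*c - b^2)/(2*a))^2)⁻¹ := by
  funext v
  rw [← mul_inv]
  congr 1
  have hy : (Real.sqrt (4*a*c - b^2))^2 = 4*a*c - b^2 := Real.sq_sqrt hd.le
  field_simp
  nlinarith [hy, Real.sq_sqrt (show (0:ℝ) ≤ a*c*4 - b^2 by linarith)]

lemma integrable_inv_quadratic (a b c : ℝ) (ha : 0 < a) (hd : 0 < 4*a*c - b^2) :
    Integrable (fun v : ℝ => (a*v^2 + b*v + c)⁻¹) := by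
  rw [quad_eq a b c ha hd]
  exact (integrable_inv_sq_add _ _ (by positivity)).const_mul _

lemma integral_inv_quadratic (a b c : ℝ) (ha : 0 < a) (hd : 0 < 4*a*c - b^2) :
    ∫ v : ℝ, (a*v^2 + b*v + c)⁻¹ = 2*π / Real.sqrt (4*a*c - b^2) := by
  rw [quad_eq a b c ha hd, integral_const_mul,
    integral_inv_sq_add _ _ (by positivity : (0:ℝ) < Real.sqrt (4*a*c - b^2)/(2*a))]
  have hs : 0 < Real.sqrt (4*a*c - b^2) := Real.sqrt_pos.mpr hd
  field_simp

lemma aux_integral (α δ r s : ℝ) (hα : 0 < α) (hδ : 0 < δ)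
    (hΔ : 0 < (2*(α*δ)+r)^2 - (r^2+s^2)) :
    (∫ p : ℝ × ℝ, ((p.1*p.2 - α*δ - r)^2 + (δ*p.1 + α*p.2 + s)^2)⁻¹)
      = 2*π^2 / Real.sqrt ((2*(α*δ)+r)^2 - (r^2+s^2)) := by
  have hΔ' : 0 < 4*δ*(δ*α^2+α*r) - s^2 := by nlinarith
  have hq : ∀ x y : ℝ, (x*y - α*δ - r)^2 + (δ*x + α*y + s)^2
      = (x^2+α^2)*y^2 + (2*(α*s - r*x))*y + ((α*δ+r)^2+(δ*x+s)^2) := by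
    intro x y; ring
  have ha' : ∀ x : ℝ, 0 < x^2+α^2 := fun x => by positivity
  have hN : ∀ x : ℝ, 0 < δ*x^2 + s*x + (δ*α^2 + α*r) := by
    intro x; nlinarith [sq_nonneg (2*δ*x+s)]
  have hdisc : ∀ x : ℝ,
      4*(x^2+α^2)*((α*δ+r)^2+(δ*x+s)^2) - (2*(α*s - r*x))^2
        = 4*(δ*x^2 + s*x + (δ*α^2 + α*r))^2 := by intro x; ring
  have hdiscpos : ∀ x : ℝ,
      0 < 4*(x^2+α^2)*((α*δ+r)^2+(δ*x+s)^2) - (2*(α*s - r*x))^2 := by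
    intro x; rw [hdisc x]; nlinarith [hN x]
  have hposxy : ∀ x y : ℝ, 0 < (x*y - α*δ - r)^2 + (δ*x + α*y + s)^2 := by
    intro x y
    rw [hq x y]
    nlinarith [sq_nonneg (2*(x^2+α^2)*y + 2*(α*s - r*x)), hdiscpos x, ha' x]
  have hcont : Continuous fun p : ℝ × ℝ =>
      ((p.1*p.2 - α*δ - r)^2 + (δ*p.1 + α*p.2 + s)^2)⁻¹ := by
    apply Continuous.inv₀ (by continuity)
    intro p; exact (hposxy p.1 p.2).ne'
  have hint_slice : ∀ x : ℝ, Integrable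
      (fun y : ℝ => ((x*y - α*δ - r)^2 + (δ*x + α*y + s)^2)⁻¹) := by
    intro x
    have : (fun y : ℝ => ((x*y - α*δ - r)^2 + (δ*x + α*y + s)^2)⁻¹)
        = fun y : ℝ => ((x^2+α^2)*y^2 + (2*(α*s - r*x))*y + ((α*δ+r)^2+(δ*x+s)^2))⁻¹ := by
      funext y; rw [hq x y]
    rw [this]
    exact integrable_inv_quadratic _ _ _ (ha' x) (hdiscpos x)
  have hslice_val : ∀ x : ℝ,
      (∫ y : ℝ, ((x*y - α*δ - r)^2 + (δ*x + α*y + s)^2)⁻¹)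
        = π * (δ*x^2 + s*x + (δ*α^2 + α*r))⁻¹ := by
    intro x
    have h1 : (fun y : ℝ => ((x*y - α*δ - r)^2 + (δ*x + α*y + s)^2)⁻¹)
        = fun y : ℝ => ((x^2+α^2)*y^2 + (2*(α*s - r*x))*y + ((α*δ+r)^2+(δ*x+s)^2))⁻¹ := by
      funext y; rw [hq x y]
    rw [h1, integral_inv_quadratic _ _ _ (ha' x) (hdiscpos x), hdisc x]
    have h2 : 4*(δ*x^2 + s*x + (δ*α^2 + α*r))^2 = (2*(δ*x^2 + s*x + (δ*α^2 + α*r)))^2 := by ring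
    rw [h2, Real.sqrt_sq (by linarith [hN x])]
    have := hN x
    field_simp
  have hInt : Integrable (fun p : ℝ × ℝ =>
      ((p.1*p.2 - α*δ - r)^2 + (δ*p.1 + α*p.2 + s)^2)⁻¹) (volume.prod volume) := by
    refine (integrable_prod_iff ((Measure.volume_eq_prod ℝ ℝ) ▸ hcont.aestronglyMeasurable)).mpr ⟨?_, ?_⟩
    · exact Filter.Eventually.of_forall fun x => (hint_slice x)
    · have : (fun x : ℝ => ∫ y : ℝ, ‖((x*y - α*δ - r)^2 + (δ*x + α*y + s)^2)⁻¹‖)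
          = fun x : ℝ => π * (δ*x^2 + s*x + (δ*α^2 + α*r))⁻¹ := by
        funext x
        rw [← hslice_val x]
        congr 1
        funext y
        exact Real.norm_of_nonneg (le_of_lt (by exact inv_pos.mpr (hposxy x y)))
      rw [this]
      exact (integrable_inv_quadratic δ s _ hδ (by linarith [hΔ'] : 0 < 4*δ*(δ*α^2+α*r) - s^2)).const_mul π
  rw [Measure.volume_eq_prod, integral_prod _ hInt]
  simp only []
  simp_rw [hslice_val]
  rw [integral_const_mul, integral_inv_quadratic δ s _ hδ (by linarith)]
  rw [show 4*δ*(δ*α^2+α*r) - s^2 = (2*(α*δ)+r)^2 - (r^2+s^2) from by ring]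
  ring


/-- The (operator) imaginary part of a complex matrix: `Im C = (C - Cᴴ)/(2i)`. -/
noncomputable def matIm {m : Type*} (C : Matrix m m ℂ) : Matrix m m ℂ :=
  (2 * Complex.I)⁻¹ • (C - Cᴴ)

theorem integral_inv_abs_det_sq (A : Matrix (Fin 2) (Fin 2) ℂ)
    (hA : (matIm A).PosDef) (h11 : (A 0 0).re = 0) (h22 : (A 1 1).re = 0) :
    0 < (2 * ((A 0 0).im * (A 1 1).im) + (A 0 1 * A 1 0).re) ^ 2
        - ‖A 0 1 * A 1 0‖ ^ 2 ∧
    (∫ v : Fin 2 → ℝ,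
        (‖(A - Matrix.diagonal (fun i => (v i : ℂ))).det‖ ^ 2)⁻¹)
      = 2 * π ^ 2 /
        Real.sqrt ((2 * ((A 0 0).im * (A 1 1).im) + (A 0 1 * A 1 0).re) ^ 2
          - ‖A 0 1 * A 1 0‖ ^ 2) := by
  set α := (A 0 0).im with hα
  set δ := (A 1 1).im with hδ
  set r := (A 0 1 * A 1 0).re with hr
  set s := (A 0 1 * A 1 0).im with hs
  have hent : ∀ i j, matIm A i j = (2*Complex.I)⁻¹ * (A i j - (starRingEnd ℂ) (A j i)) := by
    intro i j; simp [matIm, conjTranspose_apply, Matrix.sub_apply]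
  have h00 : matIm A 0 0 = (α : ℂ) := by
    rw [hent]; apply Complex.ext <;> simp [Complex.div_re, Complex.div_im] <;> ring
  have h11' : matIm A 1 1 = (δ : ℂ) := by
    rw [hent]; apply Complex.ext <;> simp [Complex.div_re, Complex.div_im] <;> ring
  have hαpos : 0 < α := by
    have := hA.dotProduct_mulVec_pos (x := Pi.single 0 1) (by simp [Function.ne_iff])
    simp [dotProduct, mulVec, Pi.single_apply, Fin.sum_univ_two] at this
    rw [h00] at this
    simpa using this
  have hδpos : 0 < δ := by
    have := hA.dotProduct_mulVec_pos (x := Pi.single 1 1) (by simp [Function.ne_iff])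
    simp [dotProduct, mulVec, Pi.single_apply, Fin.sum_univ_two] at this
    rw [h11'] at this
    simpa using this
  -- determinant positivity
  have hdet := hA.det_pos
  rw [det_fin_two, h00, h11'] at hdet
  have hoffre : (matIm A 0 1 * matIm A 1 0).re
      = (Complex.normSq (A 0 1) + Complex.normSq (A 1 0) - 2*r)/4 := by
    rw [hent, hent, hr]
    simp [Complex.mul_re, Complex.mul_im, Complex.div_re, Complex.div_im, Complex.normSq_apply]
    ring
  have hdet' : 0 < α * δ - (Complex.normSq (A 0 1) + Complex.normSq (A 1 0) - 2*r)/4 := by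
    rw [Complex.lt_def] at hdet
    have := hdet.1
    simpa [hoffre] using this
  have habs2 : ‖A 0 1 * A 1 0‖ ^ 2 = r^2 + s^2 := by
    rw [Complex.sq_norm, Complex.normSq_apply, hr, hs]; ring
  have habsmul : ‖A 0 1 * A 1 0‖ = ‖A 0 1‖ * ‖A 1 0‖ :=
    norm_mul _ _
  have hb2 : Complex.normSq (A 0 1) = ‖A 0 1‖ ^ 2 := (Complex.sq_norm _).symm
  have hc2 : Complex.normSq (A 1 0) = ‖A 1 0‖ ^ 2 := (Complex.sq_norm _).symm
  have hkey : ‖A 0 1 * A 1 0‖ < 2*(α*δ) + r := by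
    rw [habsmul]
    nlinarith [sq_nonneg (‖A 0 1‖ - ‖A 1 0‖), hdet', hb2, hc2]
  have habsnn : (0:ℝ) ≤ ‖A 0 1 * A 1 0‖ := norm_nonneg _
  have hΔ : 0 < (2 * (α * δ) + r) ^ 2 - ‖A 0 1 * A 1 0‖ ^ 2 := by
    nlinarith
  refine ⟨hΔ, ?_⟩
  -- rewrite the integrand
  have hint : ∀ v : Fin 2 → ℝ,
      (‖(A - Matrix.diagonal (fun i => (v i : ℂ))).det‖ ^ 2)⁻¹
        = ((v 0 * v 1 - α*δ - r)^2 + (δ * v 0 + α * v 1 + s)^2)⁻¹ := by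
    intro v
    congr 1
    rw [Complex.sq_norm, Complex.normSq_apply]
    simp [det_fin_two, Matrix.sub_apply, diagonal_apply_eq, diagonal_apply_ne,
      Complex.mul_re, Complex.mul_im, h11, h22, hα, hδ, hr, hs]
    ring
  simp_rw [hint]
  have hequiv : (∫ v : Fin 2 → ℝ, ((v 0 * v 1 - α*δ - r)^2 + (δ * v 0 + α * v 1 + s)^2)⁻¹)
      = ∫ p : ℝ × ℝ, ((p.1 * p.2 - α*δ - r)^2 + (δ * p.1 + α * p.2 + s)^2)⁻¹ := by
    rw [← (volume_preserving_finTwoArrow ℝ).integral_comp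
      (MeasurableEquiv.measurableEmbedding _)
      (fun p : ℝ × ℝ => ((p.1 * p.2 - α*δ - r)^2 + (δ * p.1 + α * p.2 + s)^2)⁻¹)]
    rfl
  rw [hequiv, aux_integral α δ r s hαpos hδpos (by rw [habs2] at hΔ; exact hΔ), habs2]
end

section
/- Let A be an invertible n×n complex matrix (n ≥ 1) with Im A positive definite, and let v be a real number. Then det(Im[(diag(0,…,0,v) − A)⁻¹]) = det(Im(−A⁻¹)) / |1 − v·(A⁻¹)_{nn}|², where diag(0,…,0,v) is the diagonal matrix whose only possibly nonzero entry is v in position (n,n) and (A⁻¹)_{nn} is the last diagonal entry of A⁻¹. -/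
open MeasureTheory Matrix Real ComplexOrder

lemma matIm_neg {m : Type*} (C : Matrix m m ℂ) : matIm (-C) = -(matIm C) := by
  unfold matIm
  rw [Matrix.conjTranspose_neg, ← smul_neg]
  congr 1
  abel

lemma isUnit_of_matIm_posDef {m : Type*} [Fintype m] [DecidableEq m]
    (C : Matrix m m ℂ) (h : (matIm C).PosDef) : IsUnit C := by
  rw [Matrix.isUnit_iff_isUnit_det, isUnit_iff_ne_zero]
  intro hd
  obtain ⟨x, hx, hCx⟩ := (Matrix.exists_mulVec_eq_zero_iff).2 hd
  have hpos := h.dotProduct_mulVec_pos hx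
  have hzero : dotProduct (star x) ((matIm C) *ᵥ x) = 0 := by
    have h1 : dotProduct (star x) (Cᴴ *ᵥ x) = 0 := by
      rw [Matrix.dotProduct_mulVec, ← Matrix.star_mulVec, hCx]
      simp
    have h2 : dotProduct (star x) (C *ᵥ x) = 0 := by rw [hCx]; simp
    unfold matIm
    rw [Matrix.smul_mulVec, Matrix.sub_mulVec, dotProduct_smul,
      dotProduct_sub, h1, h2]
    simp
  rw [hzero] at hpos
  exact lt_irrefl _ hpos

lemma matIm_inv {m : Type*} [Fintype m] [DecidableEq m]
    (C : Matrix m m ℂ) (h : IsUnit C) : matIm C⁻¹ = C⁻¹ * (-(matIm C)) * Cᴴ⁻¹ := by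
  have hd : IsUnit C.det := (Matrix.isUnit_iff_isUnit_det C).mp h
  have hdh : IsUnit Cᴴ.det := by rw [Matrix.det_conjTranspose]; exact hd.star
  have key : C⁻¹ * (Cᴴ - C) * Cᴴ⁻¹ = C⁻¹ - Cᴴ⁻¹ := by
    rw [Matrix.mul_sub, Matrix.sub_mul, Matrix.nonsing_inv_mul C hd, Matrix.mul_assoc,
      Matrix.mul_nonsing_inv Cᴴ hdh, Matrix.one_mul, Matrix.mul_one]
  have hneg : -(matIm C) = (2 * Complex.I)⁻¹ • (Cᴴ - C) := by
    unfold matIm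
    rw [← smul_neg]
    congr 1
    abel
  rw [hneg, Matrix.mul_smul, Matrix.smul_mul, key, matIm, Matrix.conjTranspose_nonsing_inv]

theorem det_matIm_inv_single_diag (n : ℕ)
    (A : Matrix (Fin (n + 1)) (Fin (n + 1)) ℂ) (hinv : IsUnit A)
    (hA : (matIm A).PosDef) (v : ℝ) :
    (matIm ((Matrix.diagonal (fun i => if i = Fin.last n then (v : ℂ) else 0) - A)⁻¹)).det
      = (matIm (-(A⁻¹))).det /
        (((‖(1 - v * (A⁻¹ (Fin.last n) (Fin.last n)) : ℂ)‖ : ℝ) : ℂ) ^ 2) := by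
  set f : Fin (n + 1) → ℂ := fun i => if i = Fin.last n then (v : ℂ) else 0 with hf
  set D : Matrix (Fin (n + 1)) (Fin (n + 1)) ℂ := Matrix.diagonal f with hD
  set B : Matrix (Fin (n + 1)) (Fin (n + 1)) ℂ := D - A with hB
  have hdA : IsUnit A.det := (Matrix.isUnit_iff_isUnit_det A).mp hinv
  have hfstar : star f = f := by
    funext i
    by_cases h : i = Fin.last n <;> simp [hf, h]
  have hDH : Dᴴ = D := by
    rw [hD, Matrix.diagonal_conjTranspose, hfstar]
  -- matIm B = -(matIm A)
  have hImB : matIm B = -(matIm A) := by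
    unfold matIm
    rw [hB, Matrix.conjTranspose_sub, hDH, ← smul_neg]
    congr 1
    abel
  -- B is invertible
  have hBU : IsUnit B := by
    have : IsUnit (-B) := by
      apply isUnit_of_matIm_posDef
      rw [matIm_neg, hImB, neg_neg]
      exact hA
    exact (IsUnit.neg_iff B).mp this
  have hdB : IsUnit B.det := (Matrix.isUnit_iff_isUnit_det B).mp hBU
  -- determinant of B
  set c : ℂ := 1 - v * (A⁻¹ (Fin.last n) (Fin.last n)) with hc
  have hfac : B = (-A) * (1 - A⁻¹ * D) := by
    rw [Matrix.mul_sub, Matrix.mul_one, Matrix.neg_mul, ← Matrix.mul_assoc,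
      Matrix.mul_nonsing_inv A hdA, Matrix.one_mul, hB]
    abel
  have hdet1 : (1 - A⁻¹ * D).det = c := by
    have heq : (1 - A⁻¹ * D) =
        (1 : Matrix (Fin (n+1)) (Fin (n+1)) ℂ).updateCol (Fin.last n)
          (fun i => (1 : Matrix (Fin (n+1)) (Fin (n+1)) ℂ) i (Fin.last n)
            - v * A⁻¹ i (Fin.last n)) := by
      ext i j
      rw [Matrix.updateCol_apply]
      by_cases hj : j = Fin.last n
      · subst hj
        simp [Matrix.mul_apply, hD, hf, Matrix.diagonal, mul_comm]
      · simp [hj, Matrix.mul_apply, hD, hf, Matrix.diagonal, Ne.symm hj]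
    rw [heq, ← Matrix.cramer_apply, Matrix.cramer_one]
    simp [hc, Matrix.one_apply]
  have hdetB : B.det = (-1) ^ (n + 1) * A.det * c := by
    rw [hfac, Matrix.det_mul, Matrix.det_neg, hdet1]
    simp [mul_assoc]
  have hcne : c ≠ 0 := by
    intro h0
    rw [h0, mul_zero] at hdetB
    exact hdB.ne_zero hdetB
  have hdAne : A.det ≠ 0 := hdA.ne_zero
  -- compute both sides
  have hL : (matIm B⁻¹).det = (B.det)⁻¹ * (matIm A).det * (star B.det)⁻¹ := by
    rw [matIm_inv B hBU, hImB, neg_neg, Matrix.det_mul, Matrix.det_mul,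
      Matrix.det_nonsing_inv, Matrix.det_nonsing_inv, Matrix.det_conjTranspose,
      Ring.inverse_eq_inv']
  have hR : (matIm (-(A⁻¹))).det = (A.det)⁻¹ * (matIm A).det * (star A.det)⁻¹ := by
    rw [matIm_neg, matIm_inv A hinv, Matrix.mul_neg, Matrix.neg_mul, neg_neg,
      Matrix.det_mul, Matrix.det_mul, Matrix.det_nonsing_inv, Matrix.det_nonsing_inv,
      Matrix.det_conjTranspose, Ring.inverse_eq_inv']
  have habs : (((‖c‖ : ℝ) : ℂ)) ^ 2 = c * star c := by
    rw [← Complex.ofReal_pow, Complex.sq_norm]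
    rw [show (star c : ℂ) = (starRingEnd ℂ) c from rfl, Complex.mul_conj]
  have h1 : ((-1 : ℂ)) ^ (n + 1) * ((-1 : ℂ)) ^ (n + 1) = 1 := by
    rw [← pow_add]
    exact Even.neg_one_pow ⟨n + 1, rfl⟩
  have key : (B.det)⁻¹ * (star B.det)⁻¹
      = (A.det)⁻¹ * (star A.det)⁻¹ * (c * star c)⁻¹ := by
    rw [hdetB, star_mul', star_mul', star_pow, star_neg, star_one,
      ← mul_inv, ← mul_inv, ← mul_inv]
    congr 1
    linear_combination (A.det * star A.det * c * star c) * h1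
  calc (matIm B⁻¹).det = (B.det)⁻¹ * (star B.det)⁻¹ * (matIm A).det := by rw [hL]; ring
    _ = (A.det)⁻¹ * (star A.det)⁻¹ * (c * star c)⁻¹ * (matIm A).det := by rw [key]
    _ = (matIm (-(A⁻¹))).det / (((‖c‖ : ℝ) : ℂ)) ^ 2 := by rw [hR, habs]; ring
end
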